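/- Let Σⁿ be a compact n-dimensional submanifold of ℝ^{n+m} with smooth boundary, let u be a C² function on Σ, and define Φ : T^⊥(Σ∖∂Σ) → ℝ^{n+m} by Φ(x,y) = ∇^Σ u(x) + y for x ∈ Σ∖∂Σ and y ∈ T_x^⊥Σ. Then the Jacobian determinant of Φ is given by det DΦ(x,y) = det(D²_Σ u(x) − ⟨II(x), y⟩) for all (x,y) in the total space of the normal bundle of Σ∖∂Σ. -/

import Mathlib

open MeasureTheory Metric
open scoped InnerProductSpace

noncomputable section

/-- Euclidean space `ℝ^N`. -/
abbrev Euc (N : ℕ) := EuclideanSpace ℝ (Fin N)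

/-- The Lebesgue volume `|B^k|` of the unit ball in `ℝ^k`. -/
def unitBallVol (k : ℕ) : ℝ := (volume (ball (0 : Euc k) 1)).toReal

/-- The tangent space of a set `S ⊆ ℝ^N` at a point `x`, namely the linear span of
the tangent cone of `S` at `x`.  For a smooth embedded submanifold (possibly with
boundary) this is the usual tangent space. -/
def tangentSpace {N : ℕ} (S : Set (Euc N)) (x : Euc N) : Submodule ℝ (Euc N) :=
  Submodule.span ℝ (tangentConeAt ℝ S x)

/-- The orthogonal projection of the ambient space onto the tangent space of `S` at
`x`, viewed as an endomorphism of the ambient space. -/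
def tproj {N : ℕ} (S : Set (Euc N)) (x : Euc N) : Euc N →L[ℝ] Euc N :=
  (tangentSpace S x).subtypeL.comp (tangentSpace S x).orthogonalProjectionOnto

/-- `S` is a compact smooth embedded `n`-dimensional submanifold of `ℝ^N` with
(possibly empty) smooth boundary `B`: `S` is compact, `B ⊆ S`, and near every point
`S` is parametrized by a smooth injective immersion of a relatively open piece of a
half space of `ℝⁿ`, with `B` corresponding to the bounding hyperplane. -/
def IsCompactSmoothSubmanifoldWithBoundary (n N : ℕ) (S B : Set (Euc N)) : Prop :=
  IsCompact S ∧ B ⊆ S ∧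
  ∀ x ∈ S, ∃ (U : Set (Euc N)) (W : Set (Euc n)) (f : Euc n → Euc N)
      (ℓ : Euc n →ₗ[ℝ] ℝ),
    IsOpen U ∧ x ∈ U ∧ IsOpen W ∧ ℓ ≠ 0 ∧ ContDiff ℝ (⊤ : ℕ∞) f ∧
    Set.InjOn f W ∧ (∀ y ∈ W, LinearMap.ker (fderiv ℝ f y : Euc n →ₗ[ℝ] Euc N) = ⊥) ∧
    f '' (W ∩ {y | 0 ≤ ℓ y}) = S ∩ U ∧
    f '' (W ∩ {y | ℓ y = 0}) = B ∩ U

lemma hasFDerivWithinAt_eqOn_span {N : ℕ} {F : Type*} [NormedAddCommGroup F]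
    [NormedSpace ℝ F] {f : Euc N → F} {S : Set (Euc N)} {z : Euc N}
    {D₁ D₂ : Euc N →L[ℝ] F} (h₁ : HasFDerivWithinAt f D₁ S z)
    (h₂ : HasFDerivWithinAt f D₂ S z) {t : Euc N} (ht : t ∈ tangentSpace S z) :
    D₁ t = D₂ t :=
  LinearMap.eqOn_span (h₁.unique_on h₂) ht

lemma span_halfspace_eq_top {E : Type*} [AddCommGroup E] [Module ℝ E]
    (ℓ : E →ₗ[ℝ] ℝ) : Submodule.span ℝ {e | 0 ≤ ℓ e} = ⊤ := by
  rw [eq_top_iff]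
  intro e _
  rcases le_total 0 (ℓ e) with h | h
  · exact Submodule.subset_span h
  · have : -e ∈ {e | 0 ≤ ℓ e} := by simpa using h
    simpa using Submodule.neg_mem _ (Submodule.subset_span this)

lemma orthonormal_expansion {N m : ℕ} (w : Fin m → Euc N) (hw : Orthonormal ℝ w)
    {q : Euc N} (hq : q ∈ Submodule.span ℝ (Set.range w)) :
    q = ∑ a, ⟪q, w a⟫_ℝ • w a := by
  set q' := q - ∑ a, ⟪q, w a⟫_ℝ • w a with hq'
  have hq'mem : q' ∈ Submodule.span ℝ (Set.range w) := by
    apply Submodule.sub_mem _ hq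
    exact Submodule.sum_mem _ fun a _ =>
      Submodule.smul_mem _ _ (Submodule.subset_span ⟨a, rfl⟩)
  have horth : ∀ b, ⟪w b, q'⟫_ℝ = 0 := by
    intro b
    have : ∀ a, ⟪w b, ⟪q, w a⟫_ℝ • w a⟫_ℝ = if b = a then ⟪q, w b⟫_ℝ else 0 := by
      intro a
      rw [real_inner_smul_right, orthonormal_iff_ite.mp hw b a]
      by_cases h : b = a <;> simp [h]
    rw [hq', inner_sub_right, inner_sum]
    simp only [this, Finset.sum_ite_eq, Finset.mem_univ, if_true]
    rw [real_inner_comm]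
    ring
  have : ⟪q', q'⟫_ℝ = 0 := by
    have h2 : ∀ u ∈ Submodule.span ℝ (Set.range w), ⟪u, q'⟫_ℝ = 0 := by
      intro u hu
      induction hu using Submodule.span_induction with
      | mem z hz => obtain ⟨b, rfl⟩ := hz; exact horth b
      | zero => simp
      | add a b _ _ ha hb => rw [inner_add_left, ha, hb]; ring
      | smul c a _ ha => rw [real_inner_smul_left, ha]; ring
    exact h2 q' hq'mem
  have : q' = 0 := by rwa [inner_self_eq_zero] at this
  exact sub_eq_zero.mp this


lemma finrank_tangent_ge {n N : ℕ} {S B : Set (Euc N)}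
    (hS : IsCompactSmoothSubmanifoldWithBoundary n N S B) {z : Euc N} (hz : z ∈ S) :
    n ≤ Module.finrank ℝ (tangentSpace S z) := by
  obtain ⟨-, -, h⟩ := hS
  obtain ⟨U, W, f, ℓ, hU, hzU, hW, hℓ, hf, hinj, hker, himg, -⟩ := h z hz
  have hzmem : z ∈ f '' (W ∩ {y | 0 ≤ ℓ y}) := by rw [himg]; exact ⟨hz, hzU⟩
  obtain ⟨w, hw, rfl⟩ := hzmem
  set A := fderiv ℝ f w with hA
  have hdf : HasFDerivAt f A w := ((hf.differentiable (by simp)) w).hasFDerivAt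
  have hcnorm : Filter.Tendsto (fun k : ℕ => ‖(k : ℝ) + 1‖) Filter.atTop Filter.atTop := by
    have h1 : Filter.Tendsto (fun k : ℕ => (k : ℝ) + 1) Filter.atTop Filter.atTop :=
      Filter.tendsto_atTop_add_const_right _ 1 tendsto_natCast_atTop_atTop
    refine h1.congr fun k => ?_
    rw [Real.norm_eq_abs, abs_of_pos (by positivity)]
  have hcone : ∀ e ∈ {e : Euc n | 0 ≤ ℓ e}, A e ∈ tangentConeAt ℝ S (f w) := by
    intro e he
    refine mem_tangentConeAt_of_seq Filter.atTop (fun k : ℕ => (k : ℝ) + 1)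
      (fun k : ℕ => f (w + ((k : ℝ) + 1)⁻¹ • e) - f w) ?_ ?_ ?_
    · have h0 : Filter.Tendsto (fun k : ℕ => ((k : ℝ) + 1)⁻¹) Filter.atTop (nhds 0) := by
        simpa [one_div] using tendsto_one_div_add_atTop_nhds_zero_nat (𝕜 := ℝ)
      have ht : Filter.Tendsto (fun k : ℕ => w + ((k : ℝ) + 1)⁻¹ • e) Filter.atTop (nhds w) := by
        simpa using (h0.smul_const e).const_add w
      have := ((hf.continuous.tendsto w).comp ht).sub_const (f w)
      simpa using this
    · have htend : Filter.Tendsto (fun k : ℕ => w + ((k : ℝ) + 1)⁻¹ • e)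
          Filter.atTop (nhds w) := by
        have h0 : Filter.Tendsto (fun k : ℕ => ((k : ℝ) + 1)⁻¹) Filter.atTop (nhds 0) := by
          simpa using tendsto_one_div_add_atTop_nhds_zero_nat (𝕜 := ℝ)
        have := (h0.smul_const e).const_add w
        simpa using this
      have hmemW : ∀ᶠ k : ℕ in Filter.atTop, w + ((k : ℝ) + 1)⁻¹ • e ∈ W :=
        htend.eventually (hW.eventually_mem hw.1)
      filter_upwards [hmemW] with k hk
      have hHmem : w + ((k : ℝ) + 1)⁻¹ • e ∈ W ∩ {y | 0 ≤ ℓ y} := by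
        refine ⟨hk, ?_⟩
        have : ℓ (w + ((k : ℝ) + 1)⁻¹ • e) = ℓ w + ((k : ℝ) + 1)⁻¹ * ℓ e := by
          rw [map_add, ℓ.map_smul, smul_eq_mul]
        rw [Set.mem_setOf_eq, this]
        have h1 : (0:ℝ) ≤ ℓ w := hw.2
        have he' : (0:ℝ) ≤ ℓ e := he
        have h2 : (0:ℝ) ≤ ((k : ℝ) + 1)⁻¹ * ℓ e := by positivity
        linarith
      have : f (w + ((k : ℝ) + 1)⁻¹ • e) ∈ S ∩ U := himg ▸ Set.mem_image_of_mem f hHmem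
      simpa [add_sub_cancel] using this.1
    · exact hdf.lim e hcnorm
  have hrange : LinearMap.range (A.toLinearMap) ≤ tangentSpace S (f w) := by
    rw [← Submodule.map_top, ← span_halfspace_eq_top ℓ, Submodule.map_span]
    apply Submodule.span_mono
    rintro _ ⟨e, he, rfl⟩
    exact hcone e he
  have hker' : LinearMap.ker (A.toLinearMap) = ⊥ := hker w hw.1
  have hfr : Module.finrank ℝ (LinearMap.range A.toLinearMap) = n := by
    have := A.toLinearMap.finrank_range_add_finrank_ker
    rw [hker', finrank_bot, add_zero] at this
    simpa [finrank_euclideanSpace] using this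
  calc n = Module.finrank ℝ (LinearMap.range A.toLinearMap) := hfr.symm
    _ ≤ Module.finrank ℝ (tangentSpace S (f w)) := Submodule.finrank_mono hrange

lemma mem_orthogonal_span_range {N : ℕ} {ι : Type*} (w : ι → Euc N) {q : Euc N}
    (h : ∀ b, ⟪w b, q⟫_ℝ = 0) : q ∈ (Submodule.span ℝ (Set.range w))ᗮ := by
  rw [Submodule.mem_orthogonal]
  intro u hu
  induction hu using Submodule.span_induction with
  | mem z hz => obtain ⟨b, rfl⟩ := hz; exact h b
  | zero => simp
  | add a b _ _ ha hb => rw [inner_add_left, ha, hb]; ring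
  | smul c a _ ha => rw [real_inner_smul_left, ha]; ring

lemma span_normal_eq {n m N : ℕ} {S B : Set (Euc N)}
    (hS : IsCompactSmoothSubmanifoldWithBoundary n N S B) (hN : N = n + m)
    {z : Euc N} (hz : z ∈ S) (w : Fin m → Euc N) (hw : Orthonormal ℝ w)
    (hw2 : ∀ a, w a ∈ (tangentSpace S z)ᗮ) :
    Submodule.span ℝ (Set.range w) = (tangentSpace S z)ᗮ := by
  have hle : Submodule.span ℝ (Set.range w) ≤ (tangentSpace S z)ᗮ :=
    Submodule.span_le.mpr (by rintro _ ⟨a, rfl⟩; exact hw2 a)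
  refine Submodule.eq_of_le_of_finrank_le hle ?_
  have h1 : Module.finrank ℝ (Submodule.span ℝ (Set.range w)) = m := by
    rw [finrank_span_eq_card hw.linearIndependent]; simp
  have h2 := (tangentSpace S z).finrank_add_finrank_orthogonal
  have h3 : Module.finrank ℝ (Euc N) = N := finrank_euclideanSpace_fin
  have h4 := finrank_tangent_ge hS hz
  omega

lemma gradu_diffWithin {n m N : ℕ} {S B : Set (Euc N)}
    (hS : IsCompactSmoothSubmanifoldWithBoundary n N S B) (hN : N = n + m)
    (u : Euc N → ℝ) (hu : ContDiffOn ℝ 2 u S)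
    (gradu : Euc N → Euc N)
    (hgradu : ∀ x ∈ S, gradu x ∈ tangentSpace S x ∧
      ∀ v ∈ tangentSpace S x, ⟪gradu x, v⟫_ℝ = fderivWithin ℝ u S x v)
    (Nf : Fin m → Euc N → Euc N)
    (hNf : ∀ a, ContDiff ℝ (⊤ : ℕ∞) (Nf a))
    (hNf2 : ∀ p ∈ S, Orthonormal ℝ (fun a => Nf a p) ∧
      ∀ a, Nf a p ∈ (tangentSpace S p)ᗮ)
    {x : Euc N} (hx : x ∈ S) :
    DifferentiableWithinAt ℝ gradu S x := by
  have h2 : ContDiffWithinAt ℝ ((2 : ℕ) : WithTop ℕ∞) u S x := by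
    exact_mod_cast hu x hx
  obtain ⟨t, ht, p, hp⟩ := contDiffWithinAt_nat.mp h2
  rw [Set.insert_eq_self.mpr hx] at ht
  obtain ⟨O, hO, hxO, hOsub⟩ := mem_nhdsWithin.mp ht
  have hsub : S ∩ O ⊆ t := by rw [Set.inter_comm]; exact hOsub
  set s' : Set (Euc N) := S ∩ O with hs'
  have hp' : HasFTaylorSeriesUpToOn ((2:ℕ) : WithTop ℕ∞) u p s' := hp.mono hsub
  set G : Euc N → Euc N := fun z =>
    (InnerProductSpace.toDual ℝ (Euc N)).symm
      (continuousMultilinearCurryFin1 ℝ (Euc N) ℝ (p z 1)) with hG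
  set Ψ : Euc N → Euc N := fun z => G z - ∑ a, ⟪G z, Nf a z⟫_ℝ • Nf a z with hΨ
  have hxs' : x ∈ s' := ⟨hx, hxO⟩
  have hEq : ∀ z ∈ s', gradu z = Ψ z := by
    intro z hz'
    have hzS : z ∈ S := hz'.1
    have hT : Submodule.span ℝ (Set.range fun a => Nf a z) = (tangentSpace S z)ᗮ :=
      span_normal_eq hS hN hzS _ (hNf2 z hzS).1 (hNf2 z hzS).2
    have hder : HasFDerivWithinAt u
        (continuousMultilinearCurryFin1 ℝ (Euc N) ℝ (p z 1)) S z := by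
      have h1 : HasFDerivWithinAt u
          (continuousMultilinearCurryFin1 ℝ (Euc N) ℝ (p z 1)) s' z :=
        hp'.hasFDerivWithinAt (by norm_num) hz'
      rwa [hasFDerivWithinAt_inter (hO.mem_nhds hz'.2)] at h1
    have hdiffu : DifferentiableWithinAt ℝ u S z := ⟨_, hder⟩
    have hcongr : ∀ t' ∈ tangentSpace S z,
        fderivWithin ℝ u S z t' = continuousMultilinearCurryFin1 ℝ (Euc N) ℝ (p z 1) t' :=
      fun t' ht' => hasFDerivWithinAt_eqOn_span hdiffu.hasFDerivWithinAt hder ht'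
    have hGt : ∀ t' : Euc N, ⟪G z, t'⟫_ℝ =
        continuousMultilinearCurryFin1 ℝ (Euc N) ℝ (p z 1) t' := by
      intro t'
      rw [hG]
      exact InnerProductSpace.toDual_symm_apply
    have hΨT : Ψ z ∈ tangentSpace S z := by
      rw [← (tangentSpace S z).orthogonal_orthogonal, ← hT]
      apply mem_orthogonal_span_range
      intro b
      rw [hΨ]
      simp only [inner_sub_right, inner_sum]
      have : ∀ a, ⟪Nf b z, ⟪G z, Nf a z⟫_ℝ • Nf a z⟫_ℝ
          = if b = a then ⟪G z, Nf b z⟫_ℝ else 0 := by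
        intro a
        rw [real_inner_smul_right, orthonormal_iff_ite.mp (hNf2 z hzS).1 b a]
        by_cases h : b = a <;> simp [h]
      simp only [this, Finset.sum_ite_eq, Finset.mem_univ, if_true]
      rw [real_inner_comm]
      ring
    have hqperp : ∀ t' ∈ tangentSpace S z, ⟪gradu z - Ψ z, t'⟫_ℝ = 0 := by
      intro t' ht'
      rw [inner_sub_left]
      have e1 : ⟪gradu z, t'⟫_ℝ = fderivWithin ℝ u S z t' := (hgradu z hzS).2 t' ht'
      have e2 : ⟪Ψ z, t'⟫_ℝ = ⟪G z, t'⟫_ℝ := by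
        rw [hΨ]
        simp only [inner_sub_left, sum_inner]
        have : ∀ a, ⟪⟪G z, Nf a z⟫_ℝ • Nf a z, t'⟫_ℝ = 0 := by
          intro a
          rw [real_inner_smul_left]
          have := Submodule.inner_left_of_mem_orthogonal ht' ((hNf2 z hzS).2 a)
          rw [this]; ring
        rw [Finset.sum_eq_zero fun a _ => this a, sub_zero]
      rw [e1, e2, hGt t', hcongr t' ht']
      ring
    have hq0 : gradu z - Ψ z = 0 := by
      rw [← inner_self_eq_zero (𝕜 := ℝ)]
      exact hqperp _ (Submodule.sub_mem _ (hgradu z hzS).1 hΨT)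
    exact sub_eq_zero.mp hq0
  have hdp1 : DifferentiableWithinAt ℝ (fun z => p z 1) s' x :=
    (hp'.fderivWithin 1 (by norm_num) x hxs').differentiableWithinAt
  have hdG : DifferentiableWithinAt ℝ G s' x := by
    have h1 : DifferentiableWithinAt ℝ
        (fun z => continuousMultilinearCurryFin1 ℝ (Euc N) ℝ (p z 1)) s' x := by
      exact (continuousMultilinearCurryFin1 ℝ (Euc N)
        ℝ).toContinuousLinearEquiv.differentiableAt.comp_differentiableWithinAt x hdp1
    exact (InnerProductSpace.toDual ℝ (Euc
      N)).symm.toContinuousLinearEquiv.differentiableAt.comp_differentiableWithinAt x h1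
  have hdN : ∀ a, DifferentiableWithinAt ℝ (Nf a) s' x := fun a =>
    (((hNf a).differentiable (by simp)) x).differentiableWithinAt
  have hdΨ : DifferentiableWithinAt ℝ Ψ s' x := by
    apply hdG.sub
    apply DifferentiableWithinAt.fun_sum
    intro a _
    exact (hdG.inner ℝ (hdN a)).smul (hdN a)
  have hgo : DifferentiableWithinAt ℝ gradu s' x :=
    hdΨ.congr (fun z hz => hEq z hz) (hEq x hxs')
  rwa [differentiableWithinAt_inter (hO.mem_nhds hxO)] at hgo

/-- **Lemma 3.2 (Brendle, Lemma 5).**  For a `C²` function `u` on a compact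
submanifold `Σⁿ ⊆ ℝ^{n+m}` with boundary, the Jacobian determinant of the normal
exponential-type map `Φ(x,y) = ∇^Σ u(x) + y` on the normal bundle of `Σ∖∂Σ`,
computed (with respect to the natural volume of the normal bundle) in any adapted
orthonormal frame consisting of an orthonormal tangent basis `v` at `x` and a smooth
orthonormal normal frame `Nf` along `Σ`, equals `det (D²_Σ u(x) - ⟨II(x), y⟩)`. -/
theorem jacobian_det_phi
    (n m : ℕ)
    (S bS : Set (Euc (n + m)))
    (hS : IsCompactSmoothSubmanifoldWithBoundary n (n + m) S bS)
    -- the second fundamental form `II` of `Σ`, normal-bundle valued, characterized by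
    -- `⟪II(v,w), Z⟫ = -⟪D̄_v Z, w⟫` for every smooth ambient normal field `Z`
    (II : Euc (n + m) → Euc (n + m) →ₗ[ℝ] Euc (n + m) →ₗ[ℝ] Euc (n + m))
    (hII_normal : ∀ x ∈ S, ∀ v w, II x v w ∈ (tangentSpace S x)ᗮ)
    (hII_symm : ∀ x ∈ S, ∀ v w, II x v w = II x w v)
    (hII_tan : ∀ x ∈ S, ∀ v w, II x v w = II x (tproj S x v) (tproj S x w))
    (hII_def : ∀ Z : Euc (n + m) → Euc (n + m), ContDiff ℝ (⊤ : ℕ∞) Z →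
      (∀ p ∈ S, Z p ∈ (tangentSpace S p)ᗮ) →
      ∀ x ∈ S, ∀ v ∈ tangentSpace S x, ∀ w ∈ tangentSpace S x,
        ⟪II x v w, Z x⟫_ℝ = -⟪(fderiv ℝ Z x) v, w⟫_ℝ)
    -- a `C²` function `u` on `Σ` and its tangential gradient `∇^Σ u`
    (u : Euc (n + m) → ℝ) (hu : ContDiffOn ℝ 2 u S)
    (gradu : Euc (n + m) → Euc (n + m))
    (hgradu : ∀ x ∈ S, gradu x ∈ tangentSpace S x ∧
      ∀ v ∈ tangentSpace S x, ⟪gradu x, v⟫_ℝ = fderivWithin ℝ u S x v)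
    -- the Hessian `D²_Σ u` of `u` on `Σ`, as a bilinear form on each tangent space
    (Hess : Euc (n + m) → Euc (n + m) →ₗ[ℝ] Euc (n + m) →ₗ[ℝ] ℝ)
    (hHess_def : ∀ x ∈ S, ∀ v ∈ tangentSpace S x, ∀ w ∈ tangentSpace S x,
      Hess x v w = ⟪fderivWithin ℝ gradu S x v, w⟫_ℝ)
    (hHess_tan : ∀ x ∈ S, ∀ v w, Hess x v w = Hess x (tproj S x v) (tproj S x w)) :
    ∀ x ∈ S \ bS, ∀ y ∈ (tangentSpace S x)ᗮ,
    ∀ v : Fin n → Euc (n + m), Orthonormal ℝ v → (∀ k, v k ∈ tangentSpace S x) →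
    ∀ Nf : Fin m → Euc (n + m) → Euc (n + m),
      (∀ a, ContDiff ℝ (⊤ : ℕ∞) (Nf a)) →
      (∀ p ∈ S, Orthonormal ℝ (fun a => Nf a p) ∧
        ∀ a, Nf a p ∈ (tangentSpace S p)ᗮ) →
      -- the matrix of `DΦ(x,y)` in the adapted orthonormal frame
      Matrix.det (Matrix.of fun r c : Fin n ⊕ Fin m =>
        ⟪Sum.elim v (fun a => Nf a x) r,
          Sum.elim
            (fun j => fderivWithin ℝ
              (fun p => gradu p + ∑ a, ⟪y, Nf a x⟫_ℝ • Nf a p) S x (v j))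
            (fun a => Nf a x) c⟫_ℝ)
        = Matrix.det (Matrix.of fun k l =>
            Hess x (v k) (v l) - ⟪II x (v k) (v l), y⟫_ℝ) := by
  intro x hx y hy v hv hvT Nf hNf hNf2
  have hxS : x ∈ S := hx.1
  have hspanN : Submodule.span ℝ (Set.range fun a => Nf a x) = (tangentSpace S x)ᗮ :=
    span_normal_eq hS rfl hxS _ (hNf2 x hxS).1 (hNf2 x hxS).2
  have hyexp : y = ∑ a, ⟪y, Nf a x⟫_ℝ • Nf a x :=
    orthonormal_expansion _ (hNf2 x hxS).1 (hspanN ▸ hy)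
  have hdg : DifferentiableWithinAt ℝ gradu S x :=
    gradu_diffWithin hS rfl u hu gradu hgradu Nf hNf hNf2 hxS
  set F : Euc (n + m) → Euc (n + m) :=
    fun p => gradu p + ∑ a, ⟪y, Nf a x⟫_ℝ • Nf a p with hF
  have hNder : ∀ a, HasFDerivAt (Nf a) (fderiv ℝ (Nf a) x) x := fun a =>
    (((hNf a).differentiable (by simp)) x).hasFDerivAt
  have hsum : HasFDerivWithinAt (fun p => ∑ a, ⟪y, Nf a x⟫_ℝ • Nf a p)
      (∑ a, ⟪y, Nf a x⟫_ℝ • fderiv ℝ (Nf a) x) S x := by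
    have : HasFDerivAt (fun p => ∑ a, ⟪y, Nf a x⟫_ℝ • Nf a p)
        (∑ a, ⟪y, Nf a x⟫_ℝ • fderiv ℝ (Nf a) x) x :=
      HasFDerivAt.fun_sum fun a _ => (hNder a).const_smul (⟪y, Nf a x⟫_ℝ)
    exact this.hasFDerivWithinAt
  have hFder : HasFDerivWithinAt F
      (fderivWithin ℝ gradu S x + ∑ a, ⟪y, Nf a x⟫_ℝ • fderiv ℝ (Nf a) x) S x :=
    hdg.hasFDerivWithinAt.add hsum
  have hFd : DifferentiableWithinAt ℝ F S x := ⟨_, hFder⟩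
  have hkey : ∀ j, fderivWithin ℝ F S x (v j) =
      fderivWithin ℝ gradu S x (v j) + ∑ a, ⟪y, Nf a x⟫_ℝ • fderiv ℝ (Nf a) x (v j) := by
    intro j
    have h1 := hasFDerivWithinAt_eqOn_span hFd.hasFDerivWithinAt hFder (hvT j)
    rw [h1]
    simp
  have hentry : ∀ k j, ⟪v k, fderivWithin ℝ F S x (v j)⟫_ℝ
      = Hess x (v j) (v k) - ⟪II x (v j) (v k), y⟫_ℝ := by
    intro k j
    rw [hkey j, inner_add_right]
    have e1 : ⟪v k, fderivWithin ℝ gradu S x (v j)⟫_ℝ = Hess x (v j) (v k) := by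
      rw [hHess_def x hxS (v j) (hvT j) (v k) (hvT k), real_inner_comm]
    have e3 : ⟪II x (v j) (v k), y⟫_ℝ
        = ∑ a, ⟪y, Nf a x⟫_ℝ * ⟪II x (v j) (v k), Nf a x⟫_ℝ := by
      conv_lhs => rw [hyexp]
      rw [inner_sum]
      exact Finset.sum_congr rfl fun a _ => by rw [real_inner_smul_right]
    have e2 : ⟪v k, ∑ a, ⟪y, Nf a x⟫_ℝ • fderiv ℝ (Nf a) x (v j)⟫_ℝ
        = -⟪II x (v j) (v k), y⟫_ℝ := by
      rw [inner_sum, e3, ← Finset.sum_neg_distrib]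
      refine Finset.sum_congr rfl fun a _ => ?_
      rw [real_inner_smul_right]
      have h4 := hII_def (Nf a) (hNf a) (fun p hp => (hNf2 p hp).2 a) x hxS
        (v j) (hvT j) (v k) (hvT k)
      rw [h4, real_inner_comm (v k)]
      ring
    rw [e1, e2]
    ring
  have hM : (Matrix.of fun r c : Fin n ⊕ Fin m =>
        ⟪Sum.elim v (fun a => Nf a x) r,
          Sum.elim (fun j => fderivWithin ℝ F S x (v j)) (fun a => Nf a x) c⟫_ℝ)
      = Matrix.fromBlocks
        (Matrix.of fun k j => Hess x (v j) (v k) - ⟪II x (v j) (v k), y⟫_ℝ) 0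
        (Matrix.of fun b j => ⟪Nf b x, fderivWithin ℝ F S x (v j)⟫_ℝ) 1 := by
    apply Matrix.ext
    rintro (k | b) (j | a)
    · simpa using hentry k j
    · have : ⟪v k, Nf a x⟫_ℝ = 0 :=
        Submodule.inner_right_of_mem_orthogonal (hvT k) ((hNf2 x hxS).2 a)
      simpa using this
    · simp
    · have : ⟪Nf b x, Nf a x⟫_ℝ = if b = a then 1 else 0 :=
        orthonormal_iff_ite.mp (hNf2 x hxS).1 b a
      simpa [Matrix.one_apply] using this
  rw [hM, Matrix.det_fromBlocks_zero₁₂, Matrix.det_one, mul_one,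
    ← Matrix.det_transpose (Matrix.of fun k l =>
      Hess x (v k) (v l) - ⟪II x (v k) (v l), y⟫_ℝ)]
  congr 1
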